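/- Let V be a reflexive, strictly convex Banach space with strictly convex dual, ordered by a closed convex cone V₊, and let V₋ = −V₊. Define m(u) := J(u − P_{V₋}(u)), where J: V → V* is the (single-valued) duality mapping and P_{V₋} the metric projection onto V₋. Then: (a) m(u) = 0 whenever u ≤ 0; (b) m is monotone: ⟨m(u) − m(v), u − v⟩ ≥ 0 for all u, v; and (c) if zᵨ ⇀ z weakly in V and m(zᵨ) → 0 strongly in V* (as ρ → 0), then z ≤ 0. -/

import Mathlib

open Filter Topology

-- uniqueness of duality element under strict convexity of dual
lemma dual_unique {V : Type*} [NormedAddCommGroup V] [NormedSpace ℝ V]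
    [StrictConvexSpace ℝ (V →L[ℝ] ℝ)] (x : V) (f g : V →L[ℝ] ℝ)
    (hfx : f x = ‖x‖ ^ 2) (hgx : g x = ‖x‖ ^ 2) (hf : ‖f‖ = ‖x‖) (hg : ‖g‖ = ‖x‖) :
    f = g := by
  rcases eq_or_ne x 0 with rfl | hx
  · have h1 : ‖f‖ = 0 := by simpa using hf
    have h2 : ‖g‖ = 0 := by simpa using hg
    rw [norm_eq_zero] at h1 h2; rw [h1, h2]
  · have hxpos : (0:ℝ) < ‖x‖ := norm_pos_iff.mpr hx
    have hval : (f + g) x = 2 * ‖x‖ ^ 2 := by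
      simp [hfx, hgx]; ring
    have hub : 2 * ‖x‖ ^ 2 ≤ ‖f + g‖ * ‖x‖ := by
      calc 2 * ‖x‖ ^ 2 = (f + g) x := hval.symm
        _ ≤ |(f + g) x| := le_abs_self _
        _ ≤ ‖f + g‖ * ‖x‖ := (f + g).le_opNorm x
    have hnormsum : ‖f + g‖ = ‖f‖ + ‖g‖ := by
      apply le_antisymm (norm_add_le _ _)
      rw [hf, hg]
      have := le_of_mul_le_mul_right (by nlinarith : (‖x‖ + ‖x‖) * ‖x‖ ≤ ‖f + g‖ * ‖x‖) hxpos
      linarith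
    have hray : SameRay ℝ f g := sameRay_iff_norm_add.mpr hnormsum
    rcases hray with h0 | h0 | ⟨r, s, hr, hs, hrs⟩
    · exfalso; rw [h0, norm_zero] at hf; exact hxpos.ne hf
    · exfalso; rw [h0, norm_zero] at hg; exact hxpos.ne hg
    · have : r * ‖f‖ = s * ‖g‖ := by
        rw [← norm_smul_of_nonneg hr.le, ← norm_smul_of_nonneg hs.le, hrs]
      rw [hf, hg] at this
      have hrs' : r = s := by
        exact mul_right_cancel₀ hxpos.ne' this
      subst hrs'
      exact smul_right_injective _ hr.ne' hrs

set_option maxHeartbeats 1000000 in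
/-- The variational-inequality lemma: if `‖a‖ ≤ ‖a - t•d‖` for all `t ∈ (0,1]`
and `J` is the duality map, then `J a d ≤ 0`. -/
lemma duality_vi {V : Type*} [NormedAddCommGroup V] [NormedSpace ℝ V]
    [StrictConvexSpace ℝ (V →L[ℝ] ℝ)]
    (J : V → V →L[ℝ] ℝ)
    (hJ₁ : ∀ u : V, J u u = ‖u‖ ^ 2) (hJ₂ : ∀ u : V, ‖J u‖ = ‖u‖)
    (a d : V) (hmin : ∀ t : ℝ, 0 < t → t ≤ 1 → ‖a‖ ≤ ‖a - t • d‖) :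
    J a d ≤ 0 := by
  rcases eq_or_ne a 0 with rfl | ha
  · have : ‖J 0‖ = 0 := by simpa using hJ₂ 0
    rw [norm_eq_zero] at this
    simp [this]
  have hapos : (0:ℝ) < ‖a‖ := norm_pos_iff.mpr ha
  -- the sequence of parameters
  set t : ℕ → ℝ := fun n => 1 / (n + 1 : ℝ) with ht
  have htpos : ∀ n, 0 < t n := fun n => by positivity
  have htle1 : ∀ n, t n ≤ 1 := by
    intro n
    rw [ht]
    rw [div_le_one (by positivity)]
    simp
  have htlim : Tendsto t atTop (𝓝 0) := tendsto_one_div_add_atTop_nhds_zero_nat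
  set f : ℕ → (V →L[ℝ] ℝ) := fun n => J (a - t n • d) with hf
  have hnormf : ∀ n, ‖f n‖ = ‖a - t n • d‖ := fun n => hJ₂ _
  have hmin' : ∀ n, ‖a‖ ≤ ‖a - t n • d‖ := fun n => hmin (t n) (htpos n) (htle1 n)
  -- value identity
  have hfa : ∀ n, f n a = ‖a - t n • d‖ ^ 2 + t n * f n d := by
    intro n
    have : f n (a - t n • d) = ‖a - t n • d‖ ^ 2 := hJ₁ _
    rw [map_sub, map_smul] at this
    simp only [smul_eq_mul] at this
    linarith
  -- f n d ≤ 0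
  have hfd_nonpos : ∀ n, f n d ≤ 0 := by
    intro n
    have h1 : f n a ≤ ‖a - t n • d‖ * ‖a‖ := by
      calc f n a ≤ |f n a| := le_abs_self _
        _ ≤ ‖f n‖ * ‖a‖ := (f n).le_opNorm a
        _ = ‖a - t n • d‖ * ‖a‖ := by rw [hnormf]
    have h2 : ‖a - t n • d‖ * ‖a‖ ≤ ‖a - t n • d‖ ^ 2 := by
      have := hmin' n
      nlinarith [norm_nonneg (a - t n • d)]
    have h3 := hfa n
    have h4 : t n * f n d ≤ 0 := by linarith
    nlinarith [htpos n]
  -- uniform bound on |f n d|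
  set C : ℝ := (‖a‖ + ‖d‖) * ‖d‖ with hC
  have hCnonneg : 0 ≤ C := by positivity
  have hnormbd : ∀ n, ‖a - t n • d‖ ≤ ‖a‖ + ‖d‖ := by
    intro n
    calc ‖a - t n • d‖ ≤ ‖a‖ + ‖t n • d‖ := norm_sub_le _ _
      _ = ‖a‖ + t n * ‖d‖ := by rw [norm_smul, Real.norm_eq_abs, abs_of_pos (htpos n)]
      _ ≤ ‖a‖ + 1 * ‖d‖ := by
          have := htle1 n
          have := norm_nonneg d
          nlinarith
      _ = ‖a‖ + ‖d‖ := by ring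
  have hfd_bd : ∀ n, |f n d| ≤ C := by
    intro n
    calc |f n d| ≤ ‖f n‖ * ‖d‖ := (f n).le_opNorm d
      _ = ‖a - t n • d‖ * ‖d‖ := by rw [hnormf]
      _ ≤ C := by
          have := hnormbd n
          have := norm_nonneg d
          nlinarith
  -- convergence of norms
  have hvlim : Tendsto (fun n => a - t n • d) atTop (𝓝 a) := by
    have : Tendsto (fun n => t n • d) atTop (𝓝 ((0:ℝ) • d)) := htlim.smul_const d
    rw [zero_smul] at this
    simpa using (tendsto_const_nhds (x := a)).sub this
  have hnlim : Tendsto (fun n => ‖a - t n • d‖) atTop (𝓝 ‖a‖) := hvlim.norm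
  -- f n a → ‖a‖²
  have hfalim : Tendsto (fun n => f n a) atTop (𝓝 (‖a‖ ^ 2)) := by
    have h1 : Tendsto (fun n => ‖a - t n • d‖ ^ 2) atTop (𝓝 (‖a‖ ^ 2)) := hnlim.pow 2
    have h2 : Tendsto (fun n => t n * f n d) atTop (𝓝 0) := by
      apply squeeze_zero_norm (fun n => ?_) (by simpa using htlim.norm.mul_const C)
      rw [Real.norm_eq_abs, abs_mul, abs_of_pos (htpos n)]
      exact mul_le_mul_of_nonneg_left (hfd_bd n) (htpos n).le
    have := h1.add h2
    rw [add_zero] at this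
    exact this.congr (fun n => (hfa n).symm)
  -- Bolzano-Weierstrass on (f n d)
  obtain ⟨δ, hδmem, φ, hφ, hφlim⟩ :=
    tendsto_subseq_of_bounded (Metric.isBounded_Icc (-C) 0)
      (x := fun n => f n d) (fun n => ⟨neg_le_of_abs_le (hfd_bd n), hfd_nonpos n⟩)
  rw [(isClosed_Icc).closure_eq] at hδmem
  have hδ : δ ≤ 0 := hδmem.2
  have hφtop : Tendsto φ atTop atTop := hφ.tendsto_atTop
  -- the submodule of vectors where the subsequence converges
  set S : Submodule ℝ V :=
    { carrier := {x : V | ∃ L : ℝ, Tendsto (fun k => f (φ k) x) atTop (𝓝 L)}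
      add_mem' := by
        rintro x y ⟨L1, h1⟩ ⟨L2, h2⟩
        exact ⟨L1 + L2, by simpa only [map_add] using h1.add h2⟩
      zero_mem' := ⟨0, by simp⟩
      smul_mem' := by
        rintro c x ⟨L, h⟩
        exact ⟨c * L, by simpa only [map_smul, smul_eq_mul] using h.const_mul c⟩ } with hS
  have haS : a ∈ S := ⟨‖a‖ ^ 2, hfalim.comp hφtop⟩
  have hdS : d ∈ S := ⟨δ, hφlim⟩
  -- the limit functional on S
  have hconv : ∀ x : S, ∃ L : ℝ, Tendsto (fun k => f (φ k) (x : V)) atTop (𝓝 L) := fun x => x.2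
  choose Lf hLf using hconv
  have hLlin₁ : ∀ x y : S, Lf (x + y) = Lf x + Lf y := by
    intro x y
    have h1 : Tendsto (fun k => f (φ k) ((x : V) + y)) atTop (𝓝 (Lf x + Lf y)) := by
      simpa only [map_add] using (hLf x).add (hLf y)
    exact tendsto_nhds_unique (hLf (x + y)) h1
  have hLlin₂ : ∀ (c : ℝ) (x : S), Lf (c • x) = c * Lf x := by
    intro c x
    have h1 : Tendsto (fun k => f (φ k) (c • (x : V))) atTop (𝓝 (c * Lf x)) := by
      simpa only [map_smul, smul_eq_mul] using (hLf x).const_mul c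
    exact tendsto_nhds_unique (hLf (c • x)) h1
  set g : S →ₗ[ℝ] ℝ :=
    { toFun := Lf
      map_add' := hLlin₁
      map_smul' := fun c x => hLlin₂ c x } with hg
  have hgbd : ∀ x : S, ‖g x‖ ≤ ‖a‖ * ‖x‖ := by
    intro x
    have h1 : Tendsto (fun k => |f (φ k) (x : V)|) atTop (𝓝 |Lf x|) :=
      (hLf x).abs
    have h2 : Tendsto (fun k => ‖a - t (φ k) • d‖ * ‖(x : V)‖) atTop (𝓝 (‖a‖ * ‖(x : V)‖)) :=
      ((hnlim.comp hφtop).mul_const _)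
    have h3 : ∀ k, |f (φ k) (x : V)| ≤ ‖a - t (φ k) • d‖ * ‖(x : V)‖ := by
      intro k
      calc |f (φ k) (x : V)| ≤ ‖f (φ k)‖ * ‖(x : V)‖ := (f (φ k)).le_opNorm _
        _ = ‖a - t (φ k) • d‖ * ‖(x : V)‖ := by rw [hnormf]
    exact le_of_tendsto_of_tendsto' h1 h2 h3
  set G : S →L[ℝ] ℝ := g.mkContinuous ‖a‖ hgbd with hG
  obtain ⟨F, hFeq, hFnorm⟩ := exists_extension_norm_eq (S : Subspace ℝ V) G
  have hGle : ‖G‖ ≤ ‖a‖ := g.mkContinuous_norm_le (norm_nonneg a) hgbd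
  have hFa : F a = ‖a‖ ^ 2 := by
    have h1 : F a = Lf ⟨a, haS⟩ := hFeq ⟨a, haS⟩
    have h2 : Tendsto (fun k => f (φ k) a) atTop (𝓝 (‖a‖ ^ 2)) := hfalim.comp hφtop
    rw [h1]
    exact tendsto_nhds_unique (hLf ⟨a, haS⟩) h2
  have hFd : F d = δ := by
    have h1 : F d = Lf ⟨d, hdS⟩ := hFeq ⟨d, hdS⟩
    rw [h1]
    exact tendsto_nhds_unique (hLf ⟨d, hdS⟩) hφlim
  have hFnorm' : ‖F‖ = ‖a‖ := by
    apply le_antisymm (hFnorm ▸ hGle)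
    have : ‖a‖ ^ 2 = F a := hFa.symm
    have h2 : F a ≤ ‖F‖ * ‖a‖ := by
      calc F a ≤ |F a| := le_abs_self _
        _ ≤ ‖F‖ * ‖a‖ := F.le_opNorm a
    nlinarith
  have : F = J a := dual_unique a F (J a) hFa (hJ₁ a) hFnorm' (hJ₂ a)
  rw [← this, hFd]
  exact hδ

/-- properties of the penalty map `m(u) = J(u − P_{V₋}(u))` built from
the duality mapping `J` (characterized by `⟨Ju,u⟩ = ‖u‖² = ‖Ju‖²`) and the metric
projection `proj` onto the closed convex set `V₋ = -P`:
(a) `m(u) = 0` whenever `u ≤ 0`; (b) `m` is monotone; (c) if `z_ρ ⇀ z` weakly and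
`m(z_ρ) → 0` strongly in `V*`, then `z ≤ 0`. -/
theorem duality_penalty_properties
    {V : Type*} [NormedAddCommGroup V] [NormedSpace ℝ V]
    [StrictConvexSpace ℝ V] [StrictConvexSpace ℝ (V →L[ℝ] ℝ)]
    (P : Set V) (hPclosed : IsClosed P) (hPconvex : Convex ℝ P)
    (hPcone : ∀ (c : ℝ) (x : V), 0 ≤ c → x ∈ P → c • x ∈ P)
    (J : V → V →L[ℝ] ℝ)
    (hJ₁ : ∀ u : V, J u u = ‖u‖ ^ 2) (hJ₂ : ∀ u : V, ‖J u‖ = ‖u‖)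
    (proj : V → V)
    (hprojmem : ∀ u : V, -proj u ∈ P)
    (hprojmin : ∀ u : V, ∀ w : V, -w ∈ P → ‖u - proj u‖ ≤ ‖u - w‖)
    (m : V → V →L[ℝ] ℝ) (hm : ∀ u : V, m u = J (u - proj u)) :
    (∀ u : V, -u ∈ P → m u = 0) ∧
    (∀ u v : V, 0 ≤ (m u - m v) (u - v)) ∧
    (∀ (z : ℕ → V) (zl : V),
      (∀ f : V →L[ℝ] ℝ, Tendsto (fun n => f (z n)) atTop (𝓝 (f zl))) →
      Tendsto (fun n => ‖m (z n)‖) atTop (𝓝 0) → -zl ∈ P) := by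
  have hJ0 : J 0 = 0 := by
    have : ‖J 0‖ = 0 := by simpa using hJ₂ 0
    exact norm_eq_zero.mp this
  refine ⟨?_, ?_, ?_⟩
  · -- (a)
    intro u hu
    have h1 : ‖u - proj u‖ ≤ 0 := by simpa using hprojmin u u hu
    have h2 : u - proj u = 0 := by
      have := norm_nonneg (u - proj u)
      exact norm_eq_zero.mp (le_antisymm h1 this)
    rw [hm, h2, hJ0]
  · -- (b)
    -- the variational inequality for the projection
    have hVI : ∀ x w : V, -w ∈ P → J (x - proj x) (w - proj x) ≤ 0 := by
      intro x w hw
      apply duality_vi J hJ₁ hJ₂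
      intro s hs hs1
      have hadm : -(proj x + s • (w - proj x)) ∈ P := by
        have h := hPconvex (hprojmem x) hw (by linarith : (0:ℝ) ≤ 1 - s) hs.le
          (by ring : (1 - s) + s = 1)
        have : (1 - s) • (-proj x) + s • (-w) = -(proj x + s • (w - proj x)) := by
          module
        rwa [this] at h
      have := hprojmin x (proj x + s • (w - proj x)) hadm
      have heq : x - (proj x + s • (w - proj x)) = (x - proj x) - s • (w - proj x) := by
        abel
      rwa [heq] at this
    intro u v
    set a := u - proj u with ha
    set b := v - proj v with hb
    have h1 : J a (proj v - proj u) ≤ 0 := hVI u (proj v) (hprojmem v)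
    have h2 : J b (proj u - proj v) ≤ 0 := hVI v (proj u) (hprojmem u)
    have hab : J a b ≤ ‖a‖ * ‖b‖ := by
      calc J a b ≤ |J a b| := le_abs_self _
        _ ≤ ‖J a‖ * ‖b‖ := (J a).le_opNorm b
        _ = ‖a‖ * ‖b‖ := by rw [hJ₂]
    have hba : J b a ≤ ‖b‖ * ‖a‖ := by
      calc J b a ≤ |J b a| := le_abs_self _
        _ ≤ ‖J b‖ * ‖a‖ := (J b).le_opNorm a
        _ = ‖b‖ * ‖a‖ := by rw [hJ₂]
    have hdecomp : u - v = a - b + (proj u - proj v) := by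
      rw [ha, hb]; abel
    have hexp : (m u - m v) (u - v) =
        ‖a‖ ^ 2 + ‖b‖ ^ 2 - J a b - J b a - J a (proj v - proj u) - J b (proj u - proj v) := by
      rw [hm, hm, ← ha, ← hb]
      simp only [ContinuousLinearMap.sub_apply]
      rw [hdecomp]
      simp only [map_add, map_sub]
      rw [hJ₁, hJ₁]
      have : (J a) (proj v - proj u) = (J a) (proj v) - (J a) (proj u) := map_sub _ _ _
      have : (J b) (proj u - proj v) = (J b) (proj u) - (J b) (proj v) := map_sub _ _ _
      ring
    rw [hexp]
    nlinarith [sq_nonneg (‖a‖ - ‖b‖)]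
  · -- (c)
    intro z zl hweak hnorm
    have hdist : Tendsto (fun n => ‖z n - proj (z n)‖) atTop (𝓝 0) := by
      apply hnorm.congr
      intro n
      rw [hm, hJ₂]
    by_contra hzl
    obtain ⟨f, r, hfr, hrz⟩ := geometric_hahn_banach_closed_point hPconvex hPclosed hzl
    -- f (-proj (z n)) < r for all n, but the limit is f (-zl) > r
    have hlim : Tendsto (fun n => f (-proj (z n))) atTop (𝓝 (f (-zl))) := by
      have h1 : Tendsto (fun n => f (z n - proj (z n))) atTop (𝓝 0) := by
        apply squeeze_zero_norm (fun n => f.le_opNorm _)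
        simpa using hdist.const_mul ‖f‖
      have h2 : Tendsto (fun n => f (z n)) atTop (𝓝 (f zl)) := hweak f
      have h3 := h1.sub h2
      rw [zero_sub] at h3
      have heq : ∀ n, f (z n - proj (z n)) - f (z n) = f (-proj (z n)) := by
        intro n
        rw [map_sub, map_neg]; ring
      have heq2 : -f zl = f (-zl) := by rw [map_neg]
      rw [heq2] at h3
      exact h3.congr heq
    have hle : f (-zl) ≤ r :=
      le_of_tendsto hlim (Eventually.of_forall fun n => (hfr _ (hprojmem (z n))).le)
    linarith
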